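/- arXiv:1003.0637 — 4 statements merged into one kernel-verified Lean document; each statement's English description precedes it below -/
import Mathlib

section
/- If three vectors in (ℤ/2)^l are linearly independent over ℤ/2, then the three integer vectors in ℤ^l obtained by lifting each coordinate from {0,1} ⊂ ℤ/2 to {0,1} ⊂ ℤ form a set that extends to a basis of ℤ^l (i.e., the subgroup they generate is a direct summand of ℤ^l of rank 3). -/
open Matrix

set_option maxHeartbeats 4000000 in
lemma aux_det_pm_one (D : Matrix (Fin 3) (Fin 3) ℤ) (h01 : ∀ a b, D a b = 0 ∨ D a b = 1)
    (hodd : ¬ (2:ℤ) ∣ D.det) : IsUnit D.det := by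
  rw [Int.isUnit_iff]
  rw [Matrix.det_fin_three] at hodd ⊢
  rcases h01 0 0 with h₁|h₁ <;> rcases h01 0 1 with h₂|h₂ <;> rcases h01 0 2 with h₃|h₃ <;>
  rcases h01 1 0 with h₄|h₄ <;> rcases h01 1 1 with h₅|h₅ <;> rcases h01 1 2 with h₆|h₆ <;>
  rcases h01 2 0 with h₇|h₇ <;> rcases h01 2 1 with h₈|h₈ <;> rcases h01 2 2 with h₉|h₉ <;>
  rw [h₁,h₂,h₃,h₄,h₅,h₆,h₇,h₈,h₉] at hodd ⊢ <;> omega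

theorem lift_of_linearIndependent_mod_two_is_unimodular (l : ℕ)
    (v : Fin 3 → (Fin l → ZMod 2))
    (hv : LinearIndependent (ZMod 2) v) :
    LinearIndependent ℤ (fun a : Fin 3 => fun i : Fin l => ((v a i).val : ℤ)) ∧
    ∃ N : Submodule ℤ (Fin l → ℤ),
      IsCompl (Submodule.span ℤ
        (Set.range (fun a : Fin 3 => fun i : Fin l => ((v a i).val : ℤ)))) N := by
  classical
  set w : Fin 3 → Fin l → ℤ := fun a i => ((v a i).val : ℤ) with hw
  -- column family of the mod-2 matrix
  set g : Fin l → (Fin 3 → ZMod 2) := fun j a => v a j with hg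
  have hrank : (Matrix.of v).rank = 3 := by
    have h := LinearIndependent.rank_matrix (M := Matrix.of v) hv
    simpa using h
  have hfr3 : Module.finrank (ZMod 2) (Fin 3 → ZMod 2) = 3 := by simp
  have hspan : Submodule.span (ZMod 2) (Set.range g) = ⊤ := by
    apply Submodule.eq_top_of_finrank_eq
    have h1 : LinearMap.range (Matrix.of v).mulVecLin
        = Submodule.span (ZMod 2) (Set.range ((Matrix.of v)ᵀ)) := Matrix.range_mulVecLin _
    have h2 : Set.range ((Matrix.of v)ᵀ) = Set.range g := rfl
    have h3 : Module.finrank (ZMod 2)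
        (Submodule.span (ZMod 2) (Set.range g)) = 3 := by
      rw [← h2, ← h1]; exact hrank
    rw [h3, hfr3]
  obtain ⟨b, hb_sub, hb_span, hb_ind⟩ := exists_linearIndependent (ZMod 2) (Set.range g)
  rw [hspan] at hb_span
  have hbfin : b.Finite := hb_ind.setFinite
  haveI := hbfin.fintype
  have bas : Module.Basis b (ZMod 2) (Fin 3 → ZMod 2) :=
    Module.Basis.mk hb_ind (by rw [Subtype.range_coe, hb_span])
  have hcard : Fintype.card b = 3 := by
    have h := Module.finrank_eq_card_basis bas
    rw [hfr3] at h; omega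
  let e : Fin 3 ≃ b := (Fintype.equivFinOfCardEq hcard).symm
  have hc : ∀ a : Fin 3, ∃ j, g j = ((e a : Fin 3 → ZMod 2)) := fun a => hb_sub (e a).2
  choose c hc using hc
  -- the mod-2 submatrix is invertible
  set d : Matrix (Fin 3) (Fin 3) (ZMod 2) := Matrix.of (fun a b' => v a (c b')) with hd
  have hcols : LinearIndependent (ZMod 2) (fun b' => dᵀ b') := by
    have heq : (fun b' : Fin 3 => dᵀ b') = fun b' => ((e b' : Fin 3 → ZMod 2)) := by
      funext b'; rw [← hc b']; rfl
    rw [heq]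
    exact hb_ind.comp e e.injective
  have hdunit : IsUnit d := Matrix.linearIndependent_cols_iff_isUnit.mp hcols
  -- the integer submatrix
  set D : Matrix (Fin 3) (Fin 3) ℤ := Matrix.of (fun a b' => w a (c b')) with hD
  have hmap : D.map (Int.cast : ℤ → ZMod 2) = d := by
    ext a b'
    simp [hD, hd, hw, Matrix.map_apply, ZMod.natCast_val, ZMod.cast_id]
  have hDdet : IsUnit D.det := by
    apply aux_det_pm_one
    · intro a b'
      have h2 := (v a (c b')).val_lt
      simp only [hD, hw, Matrix.of_apply]
      omega
    · intro hdvd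
      have h0 : ((D.det : ℤ) : ZMod 2) = 0 :=
        (ZMod.intCast_zmod_eq_zero_iff_dvd _ 2).mpr hdvd
      have h1 : d.det = 0 := by
        rw [← hmap]
        show ((Int.castRingHom (ZMod 2)).mapMatrix D).det = 0
        rw [← RingHom.map_det]
        exact h0
      exact (Matrix.isUnit_iff_isUnit_det d).mp hdunit |>.ne_zero h1
  -- the retraction
  set S : (Fin 3 → ℤ) →ₗ[ℤ] (Fin l → ℤ) := Fintype.linearCombination ℤ w with hS
  let π : (Fin l → ℤ) →ₗ[ℤ] (Fin 3 → ℤ) := LinearMap.funLeft ℤ ℤ c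
  let f : (Fin l → ℤ) →ₗ[ℤ] (Fin 3 → ℤ) := (Matrix.vecMulLinear D⁻¹).comp π
  have hfS : ∀ x, f (S x) = x := by
    intro x
    have h1 : π (S x) = Matrix.vecMulLinear D x := by
      ext b'
      simp only [π, hS, LinearMap.funLeft_apply, Fintype.linearCombination_apply,
        Matrix.vecMulLinear_apply, Matrix.vecMul, dotProduct, hD, Matrix.of_apply]
      simp [Finset.sum_apply, smul_eq_mul]
    show Matrix.vecMulLinear D⁻¹ (π (S x)) = x
    rw [h1]
    simp only [Matrix.vecMulLinear_apply]
    rw [Matrix.vecMul_vecMul, Matrix.mul_nonsing_inv _ hDdet, Matrix.vecMul_one]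
  constructor
  · rw [Fintype.linearIndependent_iff]
    intro q hq
    have hq' : S q = 0 := by
      rw [hS, Fintype.linearCombination_apply]; exact hq
    have : q = 0 := by rw [← hfS q, hq', map_zero]
    intro i; rw [this]; rfl
  · have hrange : Submodule.span ℤ (Set.range w) = LinearMap.range S :=
      (Fintype.range_linearCombination ℤ w).symm
    rw [hrange]
    set f' : (Fin l → ℤ) →ₗ[ℤ] (LinearMap.range S) :=
      (S.comp f).codRestrict (LinearMap.range S)
        (fun y => LinearMap.mem_range_self S (f y)) with hf'
    refine ⟨LinearMap.ker f', LinearMap.isCompl_of_proj ?_⟩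
    rintro ⟨x, u, rfl⟩
    apply Subtype.ext
    show S (f (S u)) = S u
    rw [hfS u]
end

section
/- If q divides l, then there exists a q-regular coloring of the nonzero vectors of (ℤ/2)^l using exactly (2^l − 1)/(2^q − 1) colors: identify (ℤ/2)^l with F_{2^q}^{l/q} and color two vectors alike iff they span the same F_{2^q}-line. -/
open Module
open scoped LinearAlgebra.Projectivization

theorem exists_q_regular_coloring_of_dvd (l q : ℕ) (hl : 0 < l) (hq : 0 < q)
    (hdvd : q ∣ l) :
    ∃ c : (Fin l → ZMod 2) → Fin ((2 ^ l - 1) / (2 ^ q - 1)),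
      (∀ col, ∃ v : Fin l → ZMod 2, v ≠ 0 ∧ c v = col) ∧
      (∀ s : Finset (Fin l → ZMod 2), (∀ v ∈ s, v ≠ 0) → s.card = q + 1 →
        LinearIndependent (ZMod 2) (Subtype.val : {x // x ∈ s} → (Fin l → ZMod 2)) →
        ¬ ∃ col, ∀ v ∈ s, c v = col) := by
  classical
  haveI : Fact (Nat.Prime 2) := ⟨Nat.prime_two⟩
  obtain ⟨m, rfl⟩ := hdvd
  have hm : 0 < m := Nat.pos_of_ne_zero (by rintro rfl; simp at hl)
  set F := GaloisField 2 q with hF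
  haveI : Fintype F := Fintype.ofFinite F
  have cardF : Fintype.card F = 2 ^ q := by
    have := GaloisField.card 2 q hq.ne'
    rwa [Nat.card_eq_fintype_card] at this
  have finrankF : finrank (ZMod 2) F = q := GaloisField.finrank 2 hq.ne'
  set V := (Fin m → F) with hV
  haveI : Nonempty (Fin m) := Fin.pos_iff_nonempty.mp hm
  haveI : Nontrivial V := by infer_instance
  -- finrank of V over ZMod 2
  have finrankV : finrank (ZMod 2) V = q * m := by
    rw [Module.finrank_pi_fintype, Finset.sum_const, Finset.card_univ, Fintype.card_fin,
      finrankF, smul_eq_mul, mul_comm]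
  have finrankDom : finrank (ZMod 2) (Fin (q * m) → ZMod 2) = q * m := by
    rw [Module.finrank_pi, Fintype.card_fin]
  let e : (Fin (q * m) → ZMod 2) ≃ₗ[ZMod 2] V :=
    LinearEquiv.ofFinrankEq _ _ (by rw [finrankDom, finrankV])
  -- counting the projectivization
  haveI : Finite (ℙ F V) := Quotient.finite _
  haveI : Fintype (ℙ F V) := Fintype.ofFinite _
  have fibEquiv : ∀ x : ℙ F V, Fˣ ≃ { u : { v : V // v ≠ 0 } // Projectivization.mk' F u = x } := by
    intro x
    refine Equiv.ofBijective (fun a => ⟨⟨(a : F) • x.rep, smul_ne_zero a.ne_zero x.rep_nonzero⟩, ?_⟩)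
      ⟨?_, ?_⟩
    · rw [Projectivization.mk'_eq_mk]
      conv_rhs => rw [← x.mk_rep]
      rw [Projectivization.mk_eq_mk_iff]
      exact ⟨a, rfl⟩
    · intro a b hab
      have h : (a : F) • x.rep = (b : F) • x.rep :=
        congrArg (fun z : { u : { v : V // v ≠ 0 } // Projectivization.mk' F u = x } =>
          (z.1 : V)) hab
      exact Units.ext (smul_left_injective F x.rep_nonzero h)
    · rintro ⟨⟨u, hu⟩, hux⟩
      rw [Projectivization.mk'_eq_mk] at hux
      rw [← x.mk_rep, Projectivization.mk_eq_mk_iff] at hux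
      obtain ⟨a, ha⟩ := hux
      exact ⟨a, by simpa [Subtype.ext_iff, Units.smul_def] using ha⟩
  have cardNZ : Fintype.card { v : V // v ≠ 0 } = 2 ^ (q * m) - 1 := by
    rw [Fintype.card_subtype_compl, Fintype.card_subtype_eq (0 : V), Fintype.card_fun, cardF,
      Fintype.card_fin, ← pow_mul]
  have hcount : Fintype.card (ℙ F V) * (2 ^ q - 1) = 2 ^ (q * m) - 1 := by
    have h2 : ∀ x : ℙ F V,
        Fintype.card { u : { v : V // v ≠ 0 } // Projectivization.mk' F u = x } = 2 ^ q - 1 := by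
      intro x
      rw [← Fintype.card_congr (fibEquiv x), Fintype.card_units, cardF]
    have h1 : Fintype.card (Σ x : ℙ F V,
        { u : { v : V // v ≠ 0 } // Projectivization.mk' F u = x }) =
        Fintype.card { v : V // v ≠ 0 } :=
      Fintype.card_congr (Equiv.sigmaFiberEquiv (Projectivization.mk' F))
    rw [cardNZ, Fintype.card_sigma,
      Finset.sum_congr rfl (fun x _ => h2 x), Finset.sum_const, Finset.card_univ,
      smul_eq_mul] at h1
    exact h1
  have hpow : (1 : ℕ) < 2 ^ q := Nat.one_lt_two_pow hq.ne'
  have hN : (2 ^ (q * m) - 1) / (2 ^ q - 1) = Fintype.card (ℙ F V) :=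
    Nat.div_eq_of_eq_mul_left (Nat.sub_pos_of_lt hpow) hcount.symm
  let eqv : ℙ F V ≃ Fin ((2 ^ (q * m) - 1) / (2 ^ q - 1)) := Fintype.equivFinOfCardEq hN.symm
  -- the coloring
  let c : (Fin (q * m) → ZMod 2) → Fin ((2 ^ (q * m) - 1) / (2 ^ q - 1)) := fun v =>
    eqv (if h : v = 0 then Classical.arbitrary _ else
      Projectivization.mk F (e v) (by simpa using h))
  refine ⟨c, ?_, ?_⟩
  · intro col
    set x := eqv.symm col with hx
    refine ⟨e.symm x.rep, by simpa using x.rep_nonzero, ?_⟩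
    have hv : e.symm x.rep ≠ 0 := by simpa using x.rep_nonzero
    have he : e (e.symm x.rep) = x.rep := e.apply_symm_apply _
    show eqv _ = col
    rw [dif_neg hv]
    have : Projectivization.mk F (e (e.symm x.rep)) (by simpa using hv) = x := by
      conv_rhs => rw [← x.mk_rep]
      rw [Projectivization.mk_eq_mk_iff']
      exact ⟨1, by rw [one_smul]; exact he.symm⟩
    rw [this, hx, Equiv.apply_symm_apply]
  · rintro s hs0 hcard hli ⟨col, hcol⟩
    have hsne : s.Nonempty := Finset.card_pos.mp (by omega)
    obtain ⟨v₀, hv₀⟩ := hsne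
    have hv₀0 : v₀ ≠ 0 := hs0 v₀ hv₀
    have hev₀ : e v₀ ≠ 0 := by simpa using hv₀0
    set p : Submodule F V := F ∙ (e v₀) with hp
    have hmem : ∀ v ∈ s, e v ∈ p := by
      intro v hv
      have h0 : v ≠ 0 := hs0 v hv
      have : c v = c v₀ := by rw [hcol v hv, hcol v₀ hv₀]
      have hmk : Projectivization.mk F (e v) (by simpa using h0) =
          Projectivization.mk F (e v₀) hev₀ := by
        have := eqv.injective (by simpa only [c, dif_neg h0, dif_neg hv₀0] using this)
        exact this
      rw [Projectivization.mk_eq_mk_iff'] at hmk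
      obtain ⟨a, ha⟩ := hmk
      exact Submodule.mem_span_singleton.mpr ⟨a, ha⟩
    set W : Submodule (ZMod 2) V := p.restrictScalars (ZMod 2) with hW
    have hWrank : finrank (ZMod 2) W = q := by
      have h1 : finrank (ZMod 2) W = finrank (ZMod 2) p :=
        ((Submodule.restrictScalarsEquiv (ZMod 2) F V p).restrictScalars (ZMod 2)).finrank_eq
      have h2 : finrank (ZMod 2) F * finrank F p = finrank (ZMod 2) p :=
        Module.finrank_mul_finrank _ _ _
      rw [h1, ← h2, finrank_span_singleton hev₀, finrankF, mul_one]
    let g : {x // x ∈ s} → W := fun x => ⟨e x.1, (Submodule.restrictScalars_mem _ _ _).mpr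
      (hmem x.1 x.2)⟩
    have hg : LinearIndependent (ZMod 2) g := by
      apply LinearIndependent.of_comp W.subtype
      have : (W.subtype : W →ₗ[ZMod 2] V) ∘ g = (e.toLinearMap : _ →ₗ[ZMod 2] V) ∘ Subtype.val :=
        funext fun x => rfl
      rw [this]
      exact hli.map' e.toLinearMap e.ker
    have hle := hg.fintype_card_le_finrank
    rw [Fintype.card_coe, hcard, hWrank] at hle
    omega
end

section
/- Let σ be a unimodular set of cardinality k in ℤ^l and let D be the subgroup it generates. Then for any set τ ⊂ ℤ^l such that σ ∪ τ is unimodular and σ ∩ τ = ∅, the image of τ under the quotient map ℤ^l → ℤ^l/D ≅ ℤ^{l−k} is a unimodular set of cardinality |τ|. -/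
theorem quotient_of_unimodular_is_unimodular (l k : ℕ)
    (σ τ : Finset (Fin l → ℤ)) (hk : σ.card = k) (hdisj : Disjoint σ τ)
    (huni : ∃ b : Module.Basis (Fin l) ℤ (Fin l → ℤ),
      ((σ : Set (Fin l → ℤ)) ∪ (τ : Set (Fin l → ℤ))) ⊆ Set.range b) :
    Set.InjOn (Submodule.span ℤ (σ : Set (Fin l → ℤ))).mkQ (τ : Set (Fin l → ℤ)) ∧
    ∃ b : Module.Basis (Fin (l - k)) ℤ
        ((Fin l → ℤ) ⧸ Submodule.span ℤ (σ : Set (Fin l → ℤ))),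
      (Submodule.span ℤ (σ : Set (Fin l → ℤ))).mkQ '' (τ : Set (Fin l → ℤ))
        ⊆ Set.range b := by
  classical
  obtain ⟨b, hb⟩ := huni
  set S : Set (Fin l) := {i | b i ∈ σ} with hSdef
  -- σ = b '' S
  have hσ : (σ : Set (Fin l → ℤ)) = b '' S := by
    ext x
    constructor
    · intro hx
      obtain ⟨i, rfl⟩ := hb (Set.mem_union_left _ hx)
      exact ⟨i, hx, rfl⟩
    · rintro ⟨i, hi, rfl⟩
      exact hi
  -- the complement subtype
  have hcard : Fintype.card {i : Fin l // b i ∉ σ} = l - k := by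
    have h1 : Fintype.card {i : Fin l // b i ∈ σ} = k := by
      rw [← hk]
      have : Function.Bijective (fun i : {i : Fin l // b i ∈ σ} => (⟨b i.1, i.2⟩ : σ)) := by
        constructor
        · intro i j hij
          exact Subtype.ext (b.injective (congrArg Subtype.val hij))
        · rintro ⟨x, hx⟩
          obtain ⟨i, rfl⟩ := hb (Set.mem_union_left _ hx)
          exact ⟨⟨i, hx⟩, rfl⟩
      rw [Fintype.card_of_bijective this, Fintype.card_coe]
    have h2 := Fintype.card_subtype_compl (fun i : Fin l => b i ∈ σ)
    rw [h1, Fintype.card_fin] at h2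
    exact h2
  -- the projection map
  set g : (Fin l → ℤ) →ₗ[ℤ] ({i : Fin l // b i ∉ σ} → ℤ) :=
    LinearMap.pi (fun j => b.coord j.1) with hgdef
  have hg_apply : ∀ x j, g x j = b.repr x j.1 := fun x j => rfl
  -- g (b i) is a single
  have hg_basis : ∀ (i : Fin l) (hi : b i ∉ σ),
      g (b i) = Pi.single (⟨i, hi⟩ : {i : Fin l // b i ∉ σ}) 1 := by
    intro i hi
    funext j
    rw [hg_apply, Module.Basis.repr_self]
    by_cases h : j = ⟨i, hi⟩
    · subst h; simp
    · have h' : i ≠ j.1 := fun he => h (Subtype.ext he.symm)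
      rw [Finsupp.single_apply, if_neg h', Pi.single_eq_of_ne h]
  -- kernel of g is span σ
  have hker : LinearMap.ker g = Submodule.span ℤ (σ : Set (Fin l → ℤ)) := by
    ext x
    rw [hσ, Module.Basis.mem_span_image, LinearMap.mem_ker]
    constructor
    · intro hx i hi
      by_contra hiS
      have : g x ⟨i, hiS⟩ = 0 := by rw [hx]; rfl
      rw [hg_apply] at this
      exact (Finsupp.mem_support_iff.mp hi) this
    · intro hsupp
      funext j
      rw [hg_apply]
      by_contra hne
      exact j.2 (hsupp (Finsupp.mem_support_iff.mpr hne))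
  -- g is surjective
  have hsurj : Function.Surjective g := by
    intro y
    refine ⟨∑ j : {i : Fin l // b i ∉ σ}, y j • b j.1, ?_⟩
    funext i
    rw [hg_apply]
    simp only [map_sum, map_smul, Module.Basis.repr_self]
    rw [Finsupp.finset_sum_apply]
    rw [Finset.sum_eq_single i]
    · simp
    · intro j _ hj
      have h' : j.1 ≠ i.1 := fun he => hj (Subtype.ext he)
      simp [Finsupp.single_apply, h']
    · simp
  -- the equivalence
  set e : ((Fin l → ℤ) ⧸ Submodule.span ℤ (σ : Set (Fin l → ℤ))) ≃ₗ[ℤ]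
      ({i : Fin l // b i ∉ σ} → ℤ) :=
    (Submodule.quotEquivOfEq _ _ hker.symm).trans (g.quotKerEquivOfSurjective hsurj) with hedef
  have he_mk : ∀ x, e ((Submodule.span ℤ (σ : Set (Fin l → ℤ))).mkQ x) = g x := fun x => rfl
  -- elements of τ are basis vectors not in σ
  have hτ : ∀ x ∈ (τ : Set (Fin l → ℤ)), ∃ (i : Fin l) (hi : b i ∉ σ), x = b i := by
    intro x hx
    obtain ⟨i, rfl⟩ := hb (Set.mem_union_right _ hx)
    exact ⟨i, fun h => (Finset.disjoint_left.mp hdisj) h hx, rfl⟩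
  constructor
  · -- injectivity
    intro x hx y hy hxy
    obtain ⟨i, hi, rfl⟩ := hτ x hx
    obtain ⟨j, hj, rfl⟩ := hτ y hy
    have : g (b i) = g (b j) := by rw [← he_mk, ← he_mk, hxy]
    rw [hg_basis i hi, hg_basis j hj] at this
    have hij : (⟨i, hi⟩ : {i : Fin l // b i ∉ σ}) = ⟨j, hj⟩ := by
      by_contra hne
      have h := congrFun this ⟨i, hi⟩
      rw [Pi.single_eq_same, Pi.single_eq_of_ne hne] at h
      exact one_ne_zero h
    have : i = j := congrArg Subtype.val hij
    rw [this]
  · -- the basis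
    let eq : {i : Fin l // b i ∉ σ} ≃ Fin (l - k) := Fintype.equivFinOfCardEq hcard
    refine ⟨((Pi.basisFun ℤ {i : Fin l // b i ∉ σ}).reindex eq).map e.symm, ?_⟩
    rintro _ ⟨x, hx, rfl⟩
    obtain ⟨i, hi, rfl⟩ := hτ x hx
    refine ⟨eq ⟨i, hi⟩, ?_⟩
    rw [Module.Basis.map_apply, Module.Basis.reindex_apply, Equiv.symm_apply_apply, Pi.basisFun_apply]
    rw [← hg_basis i hi, ← he_mk, LinearEquiv.symm_apply_apply]
end

section
/- If (x₁,…,x_p) and (y₁,…,y_q) form a good pair in (ℤ/2)^l and α is an index with 1 ≤ α ≤ p, then (x₁ + x_α,…, x_{α−1} + x_α, x_α, x_{α+1} + x_α, …, x_p + x_α) and (y₁,…,y_q) also form a good pair. -/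
/-- The set of single vectors and pairwise sums associated to a family of
vectors in `(ℤ/2)^l`. -/
def sumSet {l p : ℕ} (x : Fin p → (Fin l → ZMod 2)) : Set (Fin l → ZMod 2) :=
  Set.range x ∪ {v | ∃ a b : Fin p, a ≠ b ∧ v = x a + x b}

/-- A good pair in `(ℤ/2)^l`: two families of nonzero vectors, distinct within
each family, whose associated sets of single vectors and pairwise sums are
disjoint. -/
def GoodPair {l p q : ℕ} (x : Fin p → (Fin l → ZMod 2))
    (y : Fin q → (Fin l → ZMod 2)) : Prop :=
  (∀ i, x i ≠ 0) ∧ (∀ j, y j ≠ 0) ∧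
  Function.Injective x ∧ Function.Injective y ∧
  Disjoint (sumSet x) (sumSet y)

lemma vec_add_self {l : ℕ} (v : Fin l → ZMod 2) : v + v = 0 := by
  funext t
  exact CharTwo.add_self_eq_zero _

lemma vec_add_eq_zero_iff {l : ℕ} (a b : Fin l → ZMod 2) : a + b = 0 ↔ a = b := by
  constructor
  · intro h
    have : a + b + b = b := by rw [h]; ring
    rwa [add_assoc, vec_add_self, add_zero] at this
  · intro h; rw [h, vec_add_self]

theorem goodPair_add_transformation {l p q : ℕ}
    (x : Fin p → (Fin l → ZMod 2)) (y : Fin q → (Fin l → ZMod 2))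
    (h : GoodPair x y) (α : Fin p) :
    GoodPair (fun i => if i = α then x α else x i + x α) y := by
  obtain ⟨hx0, hy0, hxinj, hyinj, hdisj⟩ := h
  set x' : Fin p → (Fin l → ZMod 2) := fun i => if i = α then x α else x i + x α with hx'
  have hne : ∀ i : Fin p, i ≠ α → x i + x α ≠ 0 := by
    intro i hi hcon
    exact hi (hxinj ((vec_add_eq_zero_iff _ _).mp hcon))
  refine ⟨?_, hy0, ?_, hyinj, ?_⟩
  · intro i
    by_cases hi : i = α
    · simpa [hx', hi] using hx0 α
    · simpa [hx', hi] using hne i hi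
  · intro i j hij
    simp only [hx'] at hij
    by_cases hi : i = α <;> by_cases hj : j = α
    · rw [hi, hj]
    · rw [if_pos hi, if_neg hj] at hij
      exfalso
      apply hx0 j
      have := congrArg (· + x α) hij
      simpa [add_assoc, vec_add_self] using this.symm
    · rw [if_neg hi, if_pos hj] at hij
      exfalso
      apply hx0 i
      have := congrArg (· + x α) hij
      simpa [add_assoc, vec_add_self] using this
    · rw [if_neg hi, if_neg hj] at hij
      exact hxinj (by
        have := congrArg (· + x α) hij
        simpa [add_assoc, vec_add_self] using this)
  · have hset : sumSet x' = sumSet x := by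
      ext v
      constructor
      · rintro (⟨i, rfl⟩ | ⟨a, b, hab, rfl⟩)
        · by_cases hi : i = α
          · exact Or.inl ⟨α, by simp [hx', hi]⟩
          · exact Or.inr ⟨i, α, hi, by simp [hx', hi]⟩
        · by_cases ha : a = α <;> by_cases hb : b = α
          · exact absurd (ha.trans hb.symm) hab
          · refine Or.inl ⟨b, ?_⟩
            simp [hx', ha, hb, ← add_assoc, vec_add_self, add_comm]
          · refine Or.inl ⟨a, ?_⟩
            simp [hx', ha, hb, add_assoc, vec_add_self]
          · refine Or.inr ⟨a, b, hab, ?_⟩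
            simp only [hx', if_neg ha, if_neg hb]
            rw [add_assoc, ← add_assoc (x α), add_comm (x α) (x b), add_assoc,
              vec_add_self, add_zero]
      · rintro (⟨i, rfl⟩ | ⟨a, b, hab, rfl⟩)
        · by_cases hi : i = α
          · exact Or.inl ⟨α, by simp [hx', hi]⟩
          · refine Or.inr ⟨i, α, hi, ?_⟩
            simp [hx', hi, add_assoc, vec_add_self]
        · by_cases ha : a = α <;> by_cases hb : b = α
          · exact absurd (ha.trans hb.symm) hab
          · refine Or.inl ⟨b, ?_⟩
            simp [hx', hb, ha, add_comm]
          · refine Or.inl ⟨a, ?_⟩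
            simp [hx', ha, hb]
          · refine Or.inr ⟨a, b, hab, ?_⟩
            simp only [hx', if_neg ha, if_neg hb]
            rw [add_assoc, ← add_assoc (x α), add_comm (x α) (x b), add_assoc,
              vec_add_self, add_zero]
    rw [hset]
    exact hdisj
end
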